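/- Let γ be a permutation of [n] with orbits V₁,…,V_r, and let π be a premap on ±[n] whose join with the partition {±V₁,…,±V_r} is the full partition (i.e. the group generated by π together with the blocks ±V_k connects everything). Then χ(γ,π) := #(γ₊γ₋⁻¹)/2 + #(π)/2 + #(γ₊⁻¹π⁻¹γ₋)/2 − n ≤ 2. -/

import Mathlib

/-- `π` is a premap: conjugation by `k ↦ -k` gives `π⁻¹`, and no orbit of `π`
contains both `k` and `-k` (for `k ≠ 0`). -/
def IsPremap (π : Equiv.Perm ℤ) : Prop :=
  (Equiv.neg ℤ) * π * (Equiv.neg ℤ) = π⁻¹ ∧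
    ∀ k : ℤ, k ≠ 0 → ∀ m : ℤ, (π ^ m) k ≠ -k

/-- `γ₋ = δ γ δ`, where `δ : k ↦ -k`. -/
def permMinus (γ : Equiv.Perm ℤ) : Equiv.Perm ℤ :=
  (Equiv.neg ℤ) * γ * (Equiv.neg ℤ)

/-- The number of orbits of `σ` meeting the set `S`. -/
noncomputable def orbitCountOn (σ : Equiv.Perm ℤ) (S : Set ℤ) : ℕ :=
  Nat.card (Quot (fun a b : S => σ.SameCycle a b))

/-- The set `±I = I ∪ (-I)`. -/
def pmSet (I : Finset ℤ) : Set ℤ := {k : ℤ | k ∈ I ∨ -k ∈ I}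

/-- The Euler characteristic
`χ(γ,π) = #(γ₊γ₋⁻¹)/2 + #(π)/2 + #(γ₊⁻¹π⁻¹γ₋)/2 − |I|`,
all orbits counted on `±I`. -/
noncomputable def chi (I : Finset ℤ) (γ π : Equiv.Perm ℤ) : ℚ :=
  (orbitCountOn (γ * (permMinus γ)⁻¹) (pmSet I) : ℚ) / 2 +
    (orbitCountOn π (pmSet I) : ℚ) / 2 +
    (orbitCountOn (γ⁻¹ * π⁻¹ * permMinus γ) (pmSet I) : ℚ) / 2 - I.card


open Equiv Equiv.Perm

namespace S6


/-- orbit-count of a relation on a finite set -/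
noncomputable def qc (S : Finset ℤ) (r : ℤ → ℤ → Prop) : ℕ :=
  Nat.card (Quot (fun a b : (S : Set ℤ) => r a b))

def Supp (S : Finset ℤ) (σ : Perm ℤ) : Prop := ∀ k, k ∉ S → σ k = k

theorem Supp.mem (hσ : Supp S σ) {z : ℤ} (hz : z ∈ S) : σ z ∈ S := by
  by_contra h
  have h2 := hσ _ h
  have : σ z = z := σ.injective h2
  exact h (by rwa [this])

theorem Supp.mul {σ τ : Perm ℤ} (hσ : Supp S σ) (hτ : Supp S τ) : Supp S (σ * τ) := by
  intro k hk; simp [hτ k hk, hσ k hk]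

theorem Supp.inv {σ : Perm ℤ} (hσ : Supp S σ) : Supp S σ⁻¹ := by
  intro k hk
  rw [Equiv.Perm.inv_eq_iff_eq, hσ k hk]

theorem Supp.swap {x y : ℤ} (hx : x ∈ S) (hy : y ∈ S) : Supp S (Equiv.swap x y) := by
  intro k hk
  exact Equiv.swap_apply_of_ne_of_ne (fun h => hk (h ▸ hx)) (fun h => hk (h ▸ hy))

/-- closure of an equivalence under single steps of τ gives SameCycle τ inclusion -/
theorem step (e : ℤ → ℤ → Prop) (he : Equivalence e) (τ : Perm ℤ)
    (hstep : ∀ z, e z (τ z)) {z w : ℤ} (h : τ.SameCycle z w) : e z w := by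
  have key : ∀ (m : ℕ) (u : ℤ), e u ((τ ^ m) u) := by
    intro m
    induction m with
    | zero => intro u; simpa using he.refl u
    | succ m ih =>
      intro u
      have h1 : (τ ^ (m + 1)) u = (τ ^ m) (τ u) := by
        rw [pow_succ]; rfl
      rw [h1]
      exact he.trans (hstep u) (ih (τ u))
  obtain ⟨i, hi⟩ := h
  rcases i with m | m
  · rw [Int.ofNat_eq_coe, zpow_natCast] at hi
    exact hi ▸ key m z
  · have h2 : z = (τ ^ ((m : ℤ) + 1)) w := by
      rw [Int.negSucc_eq, zpow_neg] at hi
      have := congrArg (τ ^ ((m : ℤ) + 1)) hi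
      rw [← Equiv.Perm.mul_apply, mul_inv_cancel, Equiv.Perm.one_apply] at this
      rw [← this]
    rw [show ((m:ℤ)+1) = ((m+1 : ℕ) : ℤ) by push_cast; ring, zpow_natCast] at h2
    exact he.symm (h2 ▸ key (m + 1) w)

theorem exists_period {S : Finset ℤ} {σ : Perm ℤ} (hσ : Supp S σ) (z : ℤ) :
    ∃ k, 0 < k ∧ (σ ^ k) z = z := by
  by_cases hz : σ z = z
  · exact ⟨1, one_pos, by simpa using hz⟩
  · have hzS : z ∈ S := by
      by_contra h; exact hz (hσ z h)
    have horb : ∀ m : ℕ, (σ ^ m) z ∈ S := by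
      intro m; induction m with
      | zero => simpa using hzS
      | succ m ih =>
        have : (σ ^ (m + 1)) z = σ ((σ ^ m) z) := by rw [pow_succ']; rfl
        rw [this]; exact hσ.mem ih
    obtain ⟨a, c, hac, he⟩ := Finite.exists_ne_map_eq_of_infinite
      (fun m : ℕ => (⟨(σ ^ m) z, horb m⟩ : (S : Set ℤ)))
    simp only [Subtype.mk.injEq] at he
    rcases Nat.lt_or_ge a c with h | h
    · refine ⟨c - a, by omega, ?_⟩
      have : (σ ^ (a + (c - a))) z = (σ ^ a) ((σ ^ (c - a)) z) := by
        rw [pow_add]; rfl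
      rw [show a + (c - a) = c by omega] at this
      have := he.trans this
      exact ((σ ^ a).injective this).symm
    · have hlt : c < a := by omega
      refine ⟨a - c, by omega, ?_⟩
      have : (σ ^ (c + (a - c))) z = (σ ^ c) ((σ ^ (a - c)) z) := by
        rw [pow_add]; rfl
      rw [show c + (a - c) = a by omega] at this
      have := he.symm.trans this
      exact ((σ ^ c).injective this).symm

theorem zpow_mod {σ : Perm ℤ} {z : ℤ} {k : ℕ} (hk : 0 < k) (h : (σ ^ k) z = z) (i : ℤ) :
    (σ ^ i) z = (σ ^ (i % (k : ℤ)).toNat) z := by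
  have hfix : Function.IsFixedPt (⇑(σ ^ (k : ℤ))) z := by
    rwa [zpow_natCast]
  have h1 : (σ ^ i) z = (σ ^ (i % (k:ℤ) + (k:ℤ) * (i / (k:ℤ)))) z := by
    rw [Int.emod_add_mul_ediv]
  rw [h1, zpow_add, Equiv.Perm.mul_apply, zpow_mul]
  rw [Function.IsFixedPt.perm_zpow hfix (i / (k:ℤ))]
  congr 1
  rw [← zpow_natCast]
  congr 1
  exact (Int.toNat_of_nonneg (Int.emod_nonneg i (by positivity))).symm



theorem quot_mk_eq {α : Type*} {r : α → α → Prop} (hr : Equivalence r) {a b : α} :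
    Quot.mk r a = Quot.mk r b ↔ r a b := by
  rw [Quot.eq]
  exact Equivalence.eqvGen_iff hr

theorem restrict_equiv {e : ℤ → ℤ → Prop} (he : Equivalence e) (S : Finset ℤ) :
    Equivalence (fun a b : (S : Set ℤ) => e a b) :=
  ⟨fun a => he.refl _, he.symm, he.trans⟩

instance quotFinite {α : Type*} [Finite α] (r : α → α → Prop) : Finite (Quot r) :=
  Finite.of_surjective (Quot.mk r) (fun q => Quot.exists_rep q)

theorem mem_of_coe {S : Finset ℤ} (a : (S : Set ℤ)) : (a : ℤ) ∈ S := by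
  exact_mod_cast a.2

theorem qc_congr {S : Finset ℤ} {r r' : ℤ → ℤ → Prop}
    (h : ∀ a b : ℤ, a ∈ S → b ∈ S → (r a b ↔ r' a b)) : qc S r = qc S r' := by
  have : (fun a b : (S : Set ℤ) => r a b) = fun a b : (S : Set ℤ) => r' a b := by
    funext a b
    exact propext (h a b (mem_of_coe a) (mem_of_coe b))
  rw [qc, qc, this]

theorem qc_le_card {S : Finset ℤ} {r : ℤ → ℤ → Prop} : qc S r ≤ S.card := by
  have h1 : qc S r ≤ Nat.card (S : Set ℤ) := by
    apply Nat.card_le_card_of_surjective (Quot.mk _)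
    intro q
    exact Quot.exists_rep q
  rwa [Nat.card_coe_set_eq, Set.ncard_coe_finset] at h1

theorem qc_mono {S : Finset ℤ} {r r' : ℤ → ℤ → Prop}
    (h : ∀ a b : ℤ, a ∈ S → b ∈ S → r a b → r' a b) : qc S r' ≤ qc S r := by
  apply Nat.card_le_card_of_surjective
    (Quot.map id (fun (a b : (S : Set ℤ)) hab => h a b (mem_of_coe a) (mem_of_coe b) hab))
  intro q
  obtain ⟨a, rfl⟩ := Quot.exists_rep q
  exact ⟨Quot.mk _ a, rfl⟩

/-- join of an equivalence with the pair (x,y) -/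
def pj (e : ℤ → ℤ → Prop) (x y : ℤ) : ℤ → ℤ → Prop :=
  fun z w => e z w ∨ (e z x ∧ e y w) ∨ (e z y ∧ e x w)

theorem pj_equiv {e : ℤ → ℤ → Prop} (he : Equivalence e) {x y : ℤ} (hxy : ¬ e x y) :
    Equivalence (pj e x y) := by
  constructor
  · intro a; exact Or.inl (he.refl a)
  · rintro a b (h | ⟨h1, h2⟩ | ⟨h1, h2⟩)
    · exact Or.inl (he.symm h)
    · exact Or.inr (Or.inr ⟨he.symm h2, he.symm h1⟩)
    · exact Or.inr (Or.inl ⟨he.symm h2, he.symm h1⟩)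
  · rintro a b c (h | ⟨h1, h2⟩ | ⟨h1, h2⟩) (g | ⟨g1, g2⟩ | ⟨g1, g2⟩)
    · exact Or.inl (he.trans h g)
    · exact Or.inr (Or.inl ⟨he.trans h g1, g2⟩)
    · exact Or.inr (Or.inr ⟨he.trans h g1, g2⟩)
    · exact Or.inr (Or.inl ⟨h1, he.trans h2 g⟩)
    · exact absurd (he.symm (he.trans h2 g1)) hxy
    · exact Or.inl (he.trans h1 g2)
    · exact Or.inr (Or.inr ⟨h1, he.trans h2 g⟩)
    · exact Or.inl (he.trans h1 g2)
    · exact absurd (he.trans h2 g1) hxy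

theorem qc_pair {S : Finset ℤ} {e : ℤ → ℤ → Prop} (he : Equivalence e) {x y : ℤ}
    (hx : x ∈ S) (hy : y ∈ S) (hxy : ¬ e x y) : qc S (pj e x y) + 1 = qc S e := by
  classical
  set α := ((S : Set ℤ)) with hα
  have req : Equivalence (fun a b : α => e a b) := restrict_equiv he S
  have r'eq : Equivalence (fun a b : α => pj e x y a b) := restrict_equiv (pj_equiv he hxy) S
  set r := fun a b : α => e a b with hr
  set r' := fun a b : α => pj e x y a b with hr'
  set xs : α := ⟨x, by exact Finset.mem_coe.mpr hx⟩ with hxs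
  set ys : α := ⟨y, by exact Finset.mem_coe.mpr hy⟩ with hys
  set g : α → Quot r := fun w => if pj e x y ↑w x then Quot.mk r xs else Quot.mk r w with hg
  have hgresp : ∀ a b : α, r' a b → g a = g b := by
    intro a b hab
    simp only [hg]
    split_ifs with h1 h2 h2
    · rfl
    · exact absurd ((pj_equiv he hxy).trans ((pj_equiv he hxy).symm hab) h1) h2
    · exact absurd ((pj_equiv he hxy).trans hab h2) h1
    · -- neither a nor b is pj-related to x; extract e a b
      rcases hab with h | ⟨ha, hb⟩ | ⟨ha, hb⟩
      · exact (quot_mk_eq req).mpr h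
      · exact absurd (Or.inl ha) h1
      · exact absurd (Or.inr (Or.inr ⟨ha, he.refl x⟩)) h1
  set F : Quot r' ⊕ Unit → Quot r :=
    Sum.elim (Quot.lift g hgresp) (fun _ => Quot.mk r ys) with hF
  have hinj : Function.Injective F := by
    rintro (u | u) (v | v) h
    · obtain ⟨a, rfl⟩ := Quot.exists_rep u
      obtain ⟨b, rfl⟩ := Quot.exists_rep v
      simp only [hF, Sum.elim_inl, Quot.lift_mk] at h
      apply congrArg Sum.inl
      apply (quot_mk_eq r'eq).mpr
      simp only [hg] at h
      split_ifs at h with h1 h2 h2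
      · exact (pj_equiv he hxy).trans h1 ((pj_equiv he hxy).symm h2)
      · exfalso
        have := (quot_mk_eq req).mp h
        exact h2 (Or.inl (he.symm this))
      · exfalso
        have := (quot_mk_eq req).mp h
        exact h1 (Or.inl this)
      · exact Or.inl ((quot_mk_eq req).mp h)
    · obtain ⟨a, rfl⟩ := Quot.exists_rep u
      exfalso
      simp only [hF, Sum.elim_inl, Sum.elim_inr, Quot.lift_mk, hg] at h
      split_ifs at h with h1
      · exact hxy ((quot_mk_eq req).mp h)
      · exact h1 (Or.inr (Or.inr ⟨(quot_mk_eq req).mp h, he.refl x⟩))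
    · obtain ⟨b, rfl⟩ := Quot.exists_rep v
      exfalso
      simp only [hF, Sum.elim_inl, Sum.elim_inr, Quot.lift_mk, hg] at h
      split_ifs at h with h1
      · exact hxy ((quot_mk_eq req).mp h.symm)
      · exact h1 (Or.inr (Or.inr ⟨(quot_mk_eq req).mp h.symm, he.refl x⟩))
    · exact congrArg Sum.inr (Subsingleton.elim u v)
  have hsurj : Function.Surjective F := by
    intro q
    obtain ⟨z, rfl⟩ := Quot.exists_rep q
    by_cases hz : pj e x y ↑z x
    · rcases hz with hzx | ⟨hzx, hyx⟩ | ⟨hzy, _⟩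
      · refine ⟨Sum.inl (Quot.mk r' xs), ?_⟩
        simp only [hF, Sum.elim_inl, Quot.lift_mk, hg]
        rw [ite_self]
        exact (quot_mk_eq req).mpr (he.symm hzx)
      · exact absurd (he.symm hyx) hxy
      · refine ⟨Sum.inr (), ?_⟩
        simp only [hF, Sum.elim_inr]
        exact (quot_mk_eq req).mpr (he.symm hzy)
    · refine ⟨Sum.inl (Quot.mk r' z), ?_⟩
      simp only [hF, Sum.elim_inl, Quot.lift_mk, hg]
      rw [if_neg hz]
  have hcard : Nat.card (Quot r) = Nat.card (Quot r') + 1 := by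
    have h1 : Nat.card (Quot r) ≤ Nat.card (Quot r' ⊕ Unit) :=
      Nat.card_le_card_of_surjective F hsurj
    have h2 : Nat.card (Quot r' ⊕ Unit) ≤ Nat.card (Quot r) :=
      Nat.card_le_card_of_injective F hinj
    have h3 : Nat.card (Quot r' ⊕ Unit) = Nat.card (Quot r') + 1 := by
      rw [Nat.card_sum]; simp
    omega
  show Nat.card (Quot r') + 1 = Nat.card (Quot r)
  exact hcard.symm

theorem qc_conj {S : Finset ℤ} {σ τ : Perm ℤ} (hτ : ∀ z ∈ S, τ z ∈ S)
    (hτ' : ∀ z ∈ S, τ⁻¹ z ∈ S) :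
    qc S (SameCycle (τ * σ * τ⁻¹)) = qc S (SameCycle σ) := by
  set α := ((S : Set ℤ)) with hα
  set F : Quot (fun a b : α => σ.SameCycle a b) → Quot (fun a b : α => (τ*σ*τ⁻¹).SameCycle a b) :=
    Quot.lift (fun z => Quot.mk _ (⟨τ z, by exact Finset.mem_coe.mpr (hτ z (mem_of_coe z))⟩ : α))
      (fun a b hab => Quot.sound (hab.conj)) with hF
  set G : Quot (fun a b : α => (τ*σ*τ⁻¹).SameCycle a b) → Quot (fun a b : α => σ.SameCycle a b) :=
    Quot.lift (fun z => Quot.mk _ (⟨τ⁻¹ z, by exact Finset.mem_coe.mpr (hτ' z (mem_of_coe z))⟩ : α))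
      (fun a b hab => Quot.sound (sameCycle_conj.mp hab)) with hG
  rw [qc, qc]
  apply Nat.card_congr
  refine ⟨G, F, ?_, ?_⟩
  · intro q
    obtain ⟨z, rfl⟩ := Quot.exists_rep q
    simp only [hF, hG, Quot.lift_mk]
    congr 1
    exact Subtype.ext (by simp)
  · intro q
    obtain ⟨z, rfl⟩ := Quot.exists_rep q
    simp only [hF, hG, Quot.lift_mk]
    congr 1
    exact Subtype.ext (by simp)

theorem qc_one {S : Finset ℤ} : qc S (SameCycle (1 : Perm ℤ)) = S.card := by
  have h1 : qc S (SameCycle (1 : Perm ℤ)) = qc S (fun a b => a = b) :=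
    qc_congr (fun a b _ _ => Equiv.Perm.sameCycle_one)
  rw [h1, qc]
  have : (fun a b : (S : Set ℤ) => (a : ℤ) = b) = fun a b : (S : Set ℤ) => a = b := by
    funext a b
    exact propext Subtype.ext_iff.symm
  rw [this]
  have : Nat.card (Quot (fun a b : (S : Set ℤ) => a = b)) = Nat.card (S : Set ℤ) := by
    apply Nat.card_congr
    refine ⟨Quot.lift id (fun a b h => h), Quot.mk _, ?_, ?_⟩
    · intro q; obtain ⟨a, rfl⟩ := Quot.exists_rep q; rfl
    · intro a; rfl
  rw [this, Nat.card_coe_set_eq, Set.ncard_coe_finset]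



theorem pow_succ_apply (σ : Perm ℤ) (m : ℕ) (u : ℤ) :
    (σ ^ (m + 1)) u = σ ((σ ^ m) u) := by rw [pow_succ']; rfl

theorem sc_nat {σ : Perm ℤ} {u v : ℤ} (m : ℕ) (h : (σ ^ m) u = v) : σ.SameCycle u v :=
  ⟨(m : ℤ), by rwa [zpow_natCast]⟩

theorem toNat_emod_lt {i : ℤ} {k : ℕ} (hk : 0 < k) : (i % (k : ℤ)).toNat < k := by
  have h1 := Int.emod_nonneg i (show (k:ℤ) ≠ 0 by exact_mod_cast hk.ne')
  have h2 := Int.emod_lt_of_pos i (show (0:ℤ) < k by exact_mod_cast hk)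
  omega

theorem sameCycle_swap_mul {S : Finset ℤ} {σ : Perm ℤ} (hσ : Supp S σ) {x y : ℤ}
    (h : ¬ σ.SameCycle x y) : (Equiv.swap x y * σ).SameCycle x y := by
  set σ' := Equiv.swap x y * σ with hσ'
  obtain ⟨p, hp, hpy⟩ := exists_period hσ y
  have hex : ∃ j, 0 < j ∧ (σ ^ j) y = y := ⟨p, hp, hpy⟩
  classical
  set k := Nat.find hex with hkdef
  obtain ⟨hk0, hky⟩ := Nat.find_spec hex
  have hmin : ∀ j, j < k → ¬(0 < j ∧ (σ ^ j) y = y) := fun j hj => Nat.find_min hex hj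
  have trace : ∀ j, j < k → (σ' ^ j) y = (σ ^ j) y := by
    intro j
    induction j with
    | zero => intro _; rfl
    | succ j ih =>
      intro hjk
      rw [pow_succ_apply, ih (by omega), hσ', Equiv.Perm.mul_apply, ← pow_succ_apply]
      have h1 : (σ ^ (j + 1)) y ≠ y := fun hc => hmin (j+1) hjk ⟨by omega, hc⟩
      have h2 : (σ ^ (j + 1)) y ≠ x := by
        intro hc
        exact h ((sc_nat (j+1) hc).symm)
      exact Equiv.swap_apply_of_ne_of_ne h2 h1
  have hfin : (σ' ^ k) y = x := by
    have hk1 : k = (k - 1) + 1 := by omega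
    rw [hk1, pow_succ_apply, trace (k-1) (by omega), hσ', Equiv.Perm.mul_apply,
      ← pow_succ_apply, ← hk1, hky, Equiv.swap_apply_right]
  exact (sc_nat k hfin).symm

theorem not_sameCycle_swap_mul {S : Finset ℤ} {σ : Perm ℤ} (hσ : Supp S σ) {x y : ℤ}
    (hxy : x ≠ y) (h : σ.SameCycle x y) : ¬ (Equiv.swap x y * σ).SameCycle x y := by
  set σ' := Equiv.swap x y * σ with hσ'
  obtain ⟨p, hp, hpx⟩ := exists_period hσ x
  obtain ⟨i, hi⟩ := h
  classical
  have hex : ∃ j, 0 < j ∧ (σ ^ j) x = y := by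
    refine ⟨(i % (p:ℤ)).toNat, ?_, ?_⟩
    · rcases Nat.eq_zero_or_pos (i % (p:ℤ)).toNat with h0 | h0
      · exfalso
        have := (zpow_mod hp hpx i).symm.trans hi
        rw [h0] at this
        exact hxy (by simpa using this)
      · exact h0
    · exact ((zpow_mod hp hpx i).symm.trans hi)
  set k := Nat.find hex with hkdef
  obtain ⟨hk0, hky⟩ := Nat.find_spec hex
  have hmin : ∀ j, j < k → ¬(0 < j ∧ (σ ^ j) x = y) := fun j hj => Nat.find_min hex hj
  have trace : ∀ j, j < k → (σ' ^ j) x = (σ ^ j) x := by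
    intro j
    induction j with
    | zero => intro _; rfl
    | succ j ih =>
      intro hjk
      rw [pow_succ_apply, ih (by omega), hσ', Equiv.Perm.mul_apply, ← pow_succ_apply]
      have h1 : (σ ^ (j + 1)) x ≠ y := fun hc => hmin (j+1) hjk ⟨by omega, hc⟩
      have h2 : (σ ^ (j + 1)) x ≠ x := by
        intro hc
        have hsp : (σ ^ (k - (j+1))) x = y := by
          have e1 : (σ ^ k) x = (σ ^ (k - (j+1))) ((σ ^ (j+1)) x) := by
            conv_lhs => rw [show k = (k - (j+1)) + (j+1) by omega]
            rw [pow_add]; rfl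
          rw [hc] at e1
          rw [← e1, hky]
        exact hmin (k - (j+1)) (by omega) ⟨by omega, hsp⟩
      exact Equiv.swap_apply_of_ne_of_ne h2 h1
  have hfin : (σ' ^ k) x = x := by
    have hk1 : k = (k - 1) + 1 := by omega
    rw [hk1, pow_succ_apply, trace (k-1) (by omega), hσ', Equiv.Perm.mul_apply,
      ← pow_succ_apply, ← hk1, hky, Equiv.swap_apply_right]
  rintro ⟨i, hi⟩
  rw [zpow_mod hk0 hfin i, trace _ (toNat_emod_lt hk0)] at hi
  rcases Nat.eq_zero_or_pos (i % (k:ℤ)).toNat with h0 | h0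
  · rw [h0] at hi; exact hxy (by simpa using hi)
  · exact hmin _ (toNat_emod_lt hk0) ⟨h0, hi⟩



theorem sc_self (σ : Perm ℤ) (z : ℤ) : σ.SameCycle z (σ z) :=
  sameCycle_apply_right.mpr (SameCycle.refl σ z)

theorem swap_mul_cancel {x y : ℤ} (σ : Perm ℤ) :
    Equiv.swap x y * (Equiv.swap x y * σ) = σ := by
  rw [← mul_assoc, Equiv.swap_mul_self, one_mul]

theorem ocount_split {S : Finset ℤ} {σ : Perm ℤ} {x y : ℤ} (hσ : Supp S σ)
    (hx : x ∈ S) (hy : y ∈ S) (hxy : x ≠ y) (h : σ.SameCycle x y) :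
    qc S (SameCycle (Equiv.swap x y * σ)) = qc S (SameCycle σ) + 1 := by
  set σ' := Equiv.swap x y * σ with hσ'def
  have hnot : ¬ σ'.SameCycle x y := not_sameCycle_swap_mul hσ hxy h
  have heq : Equivalence σ'.SameCycle := SameCycle.equivalence σ'
  have hback : ∀ z, σ z = Equiv.swap x y (σ' z) := by
    intro z
    rw [hσ'def, Equiv.Perm.mul_apply, Equiv.swap_apply_self]
  have hsub : ∀ z w : ℤ, σ'.SameCycle z w → σ.SameCycle z w := by
    intro z w hzw
    refine step σ.SameCycle (SameCycle.equivalence σ) σ' ?_ hzw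
    intro u
    have h0 : σ.SameCycle u (σ u) := sc_self σ u
    rcases eq_or_ne (σ u) x with h1 | h1
    · have : σ' u = y := by rw [hσ'def, Equiv.Perm.mul_apply, h1, Equiv.swap_apply_left]
      rw [this]
      exact (h1 ▸ h0).trans h
    · rcases eq_or_ne (σ u) y with h2 | h2
      · have : σ' u = x := by rw [hσ'def, Equiv.Perm.mul_apply, h2, Equiv.swap_apply_right]
        rw [this]
        exact (h2 ▸ h0).trans h.symm
      · have : σ' u = σ u := by
          rw [hσ'def, Equiv.Perm.mul_apply, Equiv.swap_apply_of_ne_of_ne h1 h2]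
        rw [this]; exact h0
  have hmain : ∀ a b : ℤ, σ.SameCycle a b ↔ pj σ'.SameCycle x y a b := by
    intro a b
    constructor
    · intro hab
      refine step (pj σ'.SameCycle x y) (pj_equiv heq hnot) σ ?_ hab
      intro u
      have h0 : σ'.SameCycle u (σ' u) := sc_self σ' u
      rcases eq_or_ne (σ' u) x with h1 | h1
      · have : σ u = y := by rw [hback u, h1, Equiv.swap_apply_left]
        rw [this]
        exact Or.inr (Or.inl ⟨h1 ▸ h0, heq.refl y⟩)
      · rcases eq_or_ne (σ' u) y with h2 | h2
        · have : σ u = x := by rw [hback u, h2, Equiv.swap_apply_right]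
          rw [this]
          exact Or.inr (Or.inr ⟨h2 ▸ h0, heq.refl x⟩)
        · have : σ u = σ' u := by rw [hback u, Equiv.swap_apply_of_ne_of_ne h1 h2]
          rw [this]; exact Or.inl h0
    · rintro (hab | ⟨h1, h2⟩ | ⟨h1, h2⟩)
      · exact hsub _ _ hab
      · exact ((hsub _ _ h1).trans h).trans (hsub _ _ h2)
      · exact ((hsub _ _ h1).trans h.symm).trans (hsub _ _ h2)
  have e1 : qc S (SameCycle σ) = qc S (pj σ'.SameCycle x y) :=
    qc_congr (fun a b _ _ => hmain a b)
  have e2 := qc_pair heq hx hy hnot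
  omega

theorem ocount_merge {S : Finset ℤ} {σ : Perm ℤ} {x y : ℤ} (hσ : Supp S σ)
    (hx : x ∈ S) (hy : y ∈ S) (hxy : x ≠ y) (h : ¬ σ.SameCycle x y) :
    qc S (SameCycle (Equiv.swap x y * σ)) + 1 = qc S (SameCycle σ) := by
  set σ' := Equiv.swap x y * σ with hσ'def
  have hsc : σ'.SameCycle x y := sameCycle_swap_mul hσ h
  have heq : Equivalence σ.SameCycle := SameCycle.equivalence σ
  have heq' : Equivalence σ'.SameCycle := SameCycle.equivalence σ'
  have hback : ∀ z, σ z = Equiv.swap x y (σ' z) := by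
    intro z
    rw [hσ'def, Equiv.Perm.mul_apply, Equiv.swap_apply_self]
  have hsub : ∀ z w : ℤ, σ.SameCycle z w → σ'.SameCycle z w := by
    intro z w hzw
    refine step σ'.SameCycle heq' σ ?_ hzw
    intro u
    have h0 : σ'.SameCycle u (σ' u) := sc_self σ' u
    rcases eq_or_ne (σ' u) x with h1 | h1
    · have : σ u = y := by rw [hback u, h1, Equiv.swap_apply_left]
      rw [this]
      exact (h1 ▸ h0).trans hsc
    · rcases eq_or_ne (σ' u) y with h2 | h2
      · have : σ u = x := by rw [hback u, h2, Equiv.swap_apply_right]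
        rw [this]
        exact (h2 ▸ h0).trans hsc.symm
      · have : σ u = σ' u := by rw [hback u, Equiv.swap_apply_of_ne_of_ne h1 h2]
        rw [this]; exact h0
  have hmain : ∀ a b : ℤ, σ'.SameCycle a b ↔ pj σ.SameCycle x y a b := by
    intro a b
    constructor
    · intro hab
      refine step (pj σ.SameCycle x y) (pj_equiv heq h) σ' ?_ hab
      intro u
      have h0 : σ.SameCycle u (σ u) := sc_self σ u
      rcases eq_or_ne (σ u) x with h1 | h1
      · have : σ' u = y := by rw [hσ'def, Equiv.Perm.mul_apply, h1, Equiv.swap_apply_left]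
        rw [this]
        exact Or.inr (Or.inl ⟨h1 ▸ h0, heq.refl y⟩)
      · rcases eq_or_ne (σ u) y with h2 | h2
        · have : σ' u = x := by rw [hσ'def, Equiv.Perm.mul_apply, h2, Equiv.swap_apply_right]
          rw [this]
          exact Or.inr (Or.inr ⟨h2 ▸ h0, heq.refl x⟩)
        · have : σ' u = σ u := by
            rw [hσ'def, Equiv.Perm.mul_apply, Equiv.swap_apply_of_ne_of_ne h1 h2]
          rw [this]; exact Or.inl h0
    · rintro (hab | ⟨h1, h2⟩ | ⟨h1, h2⟩)
      · exact hsub _ _ hab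
      · exact ((hsub _ _ h1).trans hsc).trans (hsub _ _ h2)
      · exact ((hsub _ _ h1).trans hsc.symm).trans (hsub _ _ h2)
  have e1 : qc S (SameCycle σ') = qc S (pj σ.SameCycle x y) :=
    qc_congr (fun a b _ _ => hmain a b)
  have e2 := qc_pair heq hx hy h
  omega

theorem ocount_swap_le {S : Finset ℤ} {σ : Perm ℤ} {x y : ℤ} (hσ : Supp S σ)
    (hx : x ∈ S) (hy : y ∈ S) (hxy : x ≠ y) :
    qc S (SameCycle (Equiv.swap x y * σ)) ≤ qc S (SameCycle σ) + 1 := by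
  by_cases h : σ.SameCycle x y
  · exact le_of_eq (ocount_split hσ hx hy hxy h)
  · have := ocount_merge hσ hx hy hxy h
    omega

-- ### the group-orbit relation

def gRel (a b : Perm ℤ) : ℤ → ℤ → Prop :=
  Relation.EqvGen (fun z w => a.SameCycle z w ∨ b.SameCycle z w)

theorem gRel_equiv (a b : Perm ℤ) : Equivalence (gRel a b) :=
  Relation.EqvGen.is_equivalence _

theorem gRel_left {a b : Perm ℤ} {z w : ℤ} (h : a.SameCycle z w) : gRel a b z w :=
  Relation.EqvGen.rel _ _ (Or.inl h)

theorem gRel_right {a b : Perm ℤ} {z w : ℤ} (h : b.SameCycle z w) : gRel a b z w :=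
  Relation.EqvGen.rel _ _ (Or.inr h)

theorem gRel_subset {a b : Perm ℤ} {e : ℤ → ℤ → Prop} (he : Equivalence e)
    (h1 : ∀ z w, a.SameCycle z w → e z w) (h2 : ∀ z w, b.SameCycle z w → e z w)
    {z w : ℤ} (h : gRel a b z w) : e z w := by
  refine (Equivalence.eqvGen_iff he).mp (Relation.EqvGen.mono ?_ _ _ h)
  rintro u v (huv | huv)
  · exact h1 u v huv
  · exact h2 u v huv

theorem key_one (S : Finset ℤ) (b : Perm ℤ) :
    qc S (SameCycle (1 : Perm ℤ)) + qc S (SameCycle b) + qc S (SameCycle ((1 : Perm ℤ) * b)) ≤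
      S.card + 2 * qc S (gRel 1 b) := by
  rw [one_mul, qc_one]
  have : qc S (gRel 1 b) = qc S (SameCycle b) := by
    apply qc_congr
    intro z w _ _
    constructor
    · intro h
      refine gRel_subset (SameCycle.equivalence b) ?_ (fun _ _ h => h) h
      intro u v huv
      rw [sameCycle_one] at huv
      exact huv ▸ SameCycle.refl b u
    · exact gRel_right
  omega

theorem key_aux (S : Finset ℤ) (b : Perm ℤ) (hb : Supp S b) :
    ∀ m : ℕ, ∀ a : Perm ℤ, Supp S a → S.card - qc S (SameCycle a) ≤ m →
    qc S (SameCycle a) + qc S (SameCycle b) + qc S (SameCycle (a * b)) ≤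
      S.card + 2 * qc S (gRel a b) := by
  intro m
  induction m with
  | zero =>
    intro a ha hm
    by_cases h1 : a = 1
    · subst h1; exact key_one S b
    · exfalso
      obtain ⟨x, hax⟩ : ∃ x, a x ≠ x := by
        by_contra hcon
        push_neg at hcon
        exact h1 (Equiv.ext hcon)
      have hx : x ∈ S := by
        by_contra hxS; exact hax (ha x hxS)
      have hmem : a x ∈ S := ha.mem hx
      have hsc : a.SameCycle x (a x) := sc_self a x
      have hsplit := ocount_split ha hx hmem (Ne.symm hax) hsc
      have hle : qc S (SameCycle (Equiv.swap x (a x) * a)) ≤ S.card := qc_le_card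
      have hle2 : qc S (SameCycle a) ≤ S.card := qc_le_card
      omega
  | succ m ih =>
    intro a ha hm
    by_cases h1 : a = 1
    · subst h1; exact key_one S b
    obtain ⟨x, hax⟩ : ∃ x, a x ≠ x := by
      by_contra hcon
      push_neg at hcon
      exact h1 (Equiv.ext hcon)
    have hx : x ∈ S := by
      by_contra hxS; exact hax (ha x hxS)
    have hmem : a x ∈ S := ha.mem hx
    have hxax : x ≠ a x := Ne.symm hax
    set t := Equiv.swap x (a x) with htdef
    set a' := t * a with ha'def
    have ha' : Supp S a' := Supp.mul (Supp.swap hx hmem) ha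
    have hsplit : qc S (SameCycle a') = qc S (SameCycle a) + 1 :=
      ocount_split ha hx hmem hxax (sc_self a x)
    have hmeas : S.card - qc S (SameCycle a') ≤ m := by omega
    have IH := ih a' ha' hmeas
    have hta' : t * a' = a := by rw [ha'def, swap_mul_cancel]
    have hab : a * b = t * (a' * b) := by rw [← hta', mul_assoc]
    have ha'b : Supp S (a' * b) := Supp.mul ha' hb
    have hback : ∀ u, t (a' u) = a u := by
      intro u
      rw [ha'def, htdef]
      simp [Equiv.swap_apply_self]
    have hsuba' : ∀ z w, (a' * b).SameCycle z w → gRel a' b z w := by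
      intro z w hzw
      refine step (gRel a' b) (gRel_equiv a' b) (a' * b) ?_ hzw
      intro u
      exact (gRel_equiv a' b).trans (gRel_right (sc_self b u)) (gRel_left (sc_self a' (b u)))
    -- single a-step lands in pj-extended (or plain) H-classes
    have hstep_a : ∀ u, (a' u = x → False) → True := fun _ _ => trivial
    by_cases hc : gRel a' b x (a x)
    · -- x and a x already joined in H = gRel a' b
      have hsteps : ∀ u, gRel a' b u (a u) := by
        intro u
        have h0 : gRel a' b u (a' u) := gRel_left (sc_self a' u)
        rcases eq_or_ne (a' u) x with hcase | hcase
        · have hau : a u = a x := by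
            rw [← hback u, hcase, htdef]
            exact Equiv.swap_apply_left x (a x)
          rw [hau]
          exact (gRel_equiv a' b).trans (hcase ▸ h0) hc
        · rcases eq_or_ne (a' u) (a x) with hcase2 | hcase2
          · have hau : a u = x := by
              rw [← hback u, hcase2, htdef]
              exact Equiv.swap_apply_right x (a x)
            rw [hau]
            exact (gRel_equiv a' b).trans (hcase2 ▸ h0) ((gRel_equiv a' b).symm hc)
          · have hau : a u = a' u := by
              rw [← hback u, htdef]
              exact Equiv.swap_apply_of_ne_of_ne hcase hcase2
            rw [hau]; exact h0
      have hGH : ∀ z w : ℤ, z ∈ S → w ∈ S → gRel a b z w → gRel a' b z w := by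
        intro z w _ _ hzw
        refine gRel_subset (gRel_equiv a' b) ?_ (fun _ _ h => gRel_right h) hzw
        intro u v huv
        exact step (gRel a' b) (gRel_equiv a' b) a hsteps huv
      have hbound2 : qc S (gRel a' b) ≤ qc S (gRel a b) := qc_mono hGH
      have hbound1 : qc S (SameCycle (a * b)) ≤ qc S (SameCycle (a' * b)) + 1 := by
        rw [hab]
        exact ocount_swap_le ha'b hx hmem hxax
      omega
    · -- x and a x in different H-orbits
      have hnot : ¬ (a' * b).SameCycle x (a x) := fun hsc => hc (hsuba' _ _ hsc)
      have hmerge : qc S (SameCycle (a * b)) + 1 = qc S (SameCycle (a' * b)) := by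
        rw [hab]
        exact ocount_merge ha'b hx hmem hxax hnot
      have hpj := qc_pair (gRel_equiv a' b) hx hmem hc
      have hpjeq : Equivalence (pj (gRel a' b) x (a x)) := pj_equiv (gRel_equiv a' b) hc
      have hsteps : ∀ u, pj (gRel a' b) x (a x) u (a u) := by
        intro u
        have h0 : gRel a' b u (a' u) := gRel_left (sc_self a' u)
        rcases eq_or_ne (a' u) x with hcase | hcase
        · have hau : a u = a x := by
            rw [← hback u, hcase, htdef]
            exact Equiv.swap_apply_left x (a x)
          rw [hau]
          exact Or.inr (Or.inl ⟨hcase ▸ h0, (gRel_equiv a' b).refl (a x)⟩)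
        · rcases eq_or_ne (a' u) (a x) with hcase2 | hcase2
          · have hau : a u = x := by
              rw [← hback u, hcase2, htdef]
              exact Equiv.swap_apply_right x (a x)
            rw [hau]
            exact Or.inr (Or.inr ⟨hcase2 ▸ h0, (gRel_equiv a' b).refl x⟩)
          · have hau : a u = a' u := by
              rw [← hback u, htdef]
              exact Equiv.swap_apply_of_ne_of_ne hcase hcase2
            rw [hau]; exact Or.inl h0
      have hGpj : ∀ z w : ℤ, z ∈ S → w ∈ S → gRel a b z w → pj (gRel a' b) x (a x) z w := by
        intro z w _ _ hzw
        refine gRel_subset hpjeq ?_ (fun _ _ h => Or.inl (gRel_right h)) hzw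
        intro u v huv
        exact step (pj (gRel a' b) x (a x)) hpjeq a hsteps huv
      have hbound2 : qc S (pj (gRel a' b) x (a x)) ≤ qc S (gRel a b) := qc_mono hGpj
      omega


theorem key (S : Finset ℤ) (a b : Perm ℤ) (ha : Supp S a) (hb : Supp S b) :
    qc S (SameCycle a) + qc S (SameCycle b) + qc S (SameCycle (a * b)) ≤
      S.card + 2 * qc S (gRel a b) :=
  key_aux S b hb S.card a ha (Nat.sub_le _ _)


section Main

variable {n : ℕ} {γ π : Perm ℤ}

/-- abbreviation for the support hypothesis on γ -/
abbrev Hg (n : ℕ) (γ : Perm ℤ) : Prop := ∀ k : ℤ, ¬(1 ≤ k ∧ k ≤ (n : ℤ)) → γ k = k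

noncomputable def Sfin (n : ℕ) : Finset ℤ := (Finset.Icc (-(n:ℤ)) (n:ℤ)).erase 0

theorem mem_Sfin {k : ℤ} : k ∈ Sfin n ↔ (1 ≤ |k| ∧ |k| ≤ (n:ℤ)) := by
  simp only [Sfin, Finset.mem_erase, Finset.mem_Icc]
  rcases abs_cases k with ⟨h1, h2⟩ | ⟨h1, h2⟩ <;> rw [h1] <;> omega

theorem pmSet_eq : pmSet (Finset.Icc 1 (n:ℤ)) = (Sfin n : Set ℤ) := by
  ext k
  simp only [pmSet, Set.mem_setOf_eq, Finset.mem_Icc, Finset.mem_coe, Sfin,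
    Finset.mem_erase]
  omega

theorem card_Sfin : (Sfin n).card = 2 * n := by
  rw [Sfin, Finset.card_erase_of_mem (by simp [Finset.mem_Icc]), Int.card_Icc]
  omega

-- neg involution facts
theorem neg_mul_neg : (Equiv.neg ℤ) * (Equiv.neg ℤ) = 1 := by
  ext z; simp

theorem neg_inv : (Equiv.neg ℤ)⁻¹ = Equiv.neg ℤ :=
  inv_eq_of_mul_eq_one_right neg_mul_neg

theorem gfix (hγ : Hg n γ) {k : ℤ} (h : ¬(1 ≤ k ∧ k ≤ (n:ℤ))) : γ k = k := hγ k h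

theorem ginvfix (hγ : Hg n γ) {k : ℤ} (h : ¬(1 ≤ k ∧ k ≤ (n:ℤ))) : γ⁻¹ k = k := by
  rw [Equiv.Perm.inv_eq_iff_eq]
  exact (hγ k h).symm

theorem gmaps (hγ : Hg n γ) {k : ℤ} (h : 1 ≤ k ∧ k ≤ (n:ℤ)) : 1 ≤ γ k ∧ γ k ≤ (n:ℤ) := by
  by_contra hcon
  have h2 := hγ _ hcon
  have := γ.injective h2
  rw [this] at hcon
  exact hcon h

theorem ginvmaps (hγ : Hg n γ) {k : ℤ} (h : 1 ≤ k ∧ k ≤ (n:ℤ)) : 1 ≤ γ⁻¹ k ∧ γ⁻¹ k ≤ (n:ℤ) := by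
  by_contra hcon
  have h2 := ginvfix hγ hcon
  have h3 : γ⁻¹ k = k := γ⁻¹.injective h2
  rw [h3] at hcon
  exact hcon h

theorem permMinus_apply (k : ℤ) : permMinus γ k = -(γ (-k)) := by
  simp [permMinus]

theorem permMinus_inv_apply (k : ℤ) : (permMinus γ)⁻¹ k = -(γ⁻¹ (-k)) := by
  rw [permMinus, mul_inv_rev, mul_inv_rev, neg_inv]
  simp

theorem rho_supp (hγ : Hg n γ) : Supp (Sfin n) (γ * (permMinus γ)⁻¹) := by
  intro k hk
  rw [mem_Sfin] at hk
  have h1 : ¬(1 ≤ -k ∧ -k ≤ (n:ℤ)) := by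
    rcases abs_cases k with ⟨e1, e2⟩ | ⟨e1, e2⟩ <;> omega
  have h2 : ¬(1 ≤ k ∧ k ≤ (n:ℤ)) := by
    rcases abs_cases k with ⟨e1, e2⟩ | ⟨e1, e2⟩ <;> omega
  rw [Equiv.Perm.mul_apply, permMinus_inv_apply, ginvfix hγ h1, neg_neg, gfix hγ h2]

theorem pi_supp (hπsupp : ∀ k : ℤ, ¬(1 ≤ |k| ∧ |k| ≤ (n : ℤ)) → π k = k) :
    Supp (Sfin n) π := by
  intro k hk
  rw [mem_Sfin] at hk
  exact hπsupp k hk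

theorem gm_maps (hγ : Hg n γ) : ∀ z ∈ Sfin n, permMinus γ z ∈ Sfin n := by
  intro z hz
  rw [mem_Sfin] at hz ⊢
  rw [permMinus_apply]
  by_cases h : 1 ≤ -z ∧ -z ≤ (n:ℤ)
  · have := gmaps hγ h
    rw [abs_neg]
    rcases abs_cases (γ (-z)) with ⟨e1, e2⟩ | ⟨e1, e2⟩ <;> omega
  · rw [gfix hγ h, neg_neg]; exact hz

theorem gm_inv_maps (hγ : Hg n γ) : ∀ z ∈ Sfin n, (permMinus γ)⁻¹ z ∈ Sfin n := by
  intro z hz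
  rw [mem_Sfin] at hz ⊢
  rw [permMinus_inv_apply]
  by_cases h : 1 ≤ -z ∧ -z ≤ (n:ℤ)
  · have := ginvmaps hγ h
    rw [abs_neg]
    rcases abs_cases (γ⁻¹ (-z)) with ⟨e1, e2⟩ | ⟨e1, e2⟩ <;> omega
  · rw [ginvfix hγ h, neg_neg]; exact hz

-- behaviour of ρ on positive integers
theorem rho_pos (hγ : Hg n γ) {u : ℤ} (hu : 1 ≤ u) : (γ * (permMinus γ)⁻¹) u = γ u := by
  rw [Equiv.Perm.mul_apply, permMinus_inv_apply, ginvfix hγ (by omega), neg_neg]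

theorem g_pos (hγ : Hg n γ) {u : ℤ} (hu : 1 ≤ u) : 1 ≤ γ u := by
  by_cases h : 1 ≤ u ∧ u ≤ (n:ℤ)
  · exact (gmaps hγ h).1
  · rw [gfix hγ h]; exact hu

theorem ginv_pos (hγ : Hg n γ) {u : ℤ} (hu : 1 ≤ u) : 1 ≤ γ⁻¹ u := by
  by_cases h : 1 ≤ u ∧ u ≤ (n:ℤ)
  · exact (ginvmaps hγ h).1
  · rw [ginvfix hγ h]; exact hu

theorem g_zpos (hγ : Hg n γ) (i : ℤ) : ∀ u : ℤ, 1 ≤ u → 1 ≤ (γ ^ i) u := by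
  induction i using Int.induction_on with
  | zero => intro u hu; simpa using hu
  | succ i ih =>
    intro u hu
    rw [zpow_add_one, Equiv.Perm.mul_apply]
    exact ih (γ u) (g_pos hγ hu)
  | pred i ih =>
    intro u hu
    rw [zpow_sub_one, Equiv.Perm.mul_apply]
    exact ih (γ⁻¹ u) (ginv_pos hγ hu)

theorem rho_pow_pos (hγ : Hg n γ) (m : ℕ) : ∀ u : ℤ, 1 ≤ u →
    ((γ * (permMinus γ)⁻¹) ^ m) u = (γ ^ m) u ∧ 1 ≤ (γ ^ m) u := by
  induction m with
  | zero => intro u hu; exact ⟨rfl, by simpa using hu⟩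
  | succ m ih =>
    intro u hu
    obtain ⟨h1, h2⟩ := ih u hu
    rw [pow_succ_apply, pow_succ_apply, h1]
    exact ⟨rho_pos hγ h2, g_pos hγ h2⟩

theorem sc_pos (hγ : Hg n γ) {u v : ℤ} (hu : 1 ≤ u) (h : γ.SameCycle u v) :
    (γ * (permMinus γ)⁻¹).SameCycle u v := by
  obtain ⟨i, hi⟩ := h
  rcases le_or_gt 0 i with hile | hilt
  · refine sc_nat i.toNat ?_
    rw [(rho_pow_pos hγ i.toNat u hu).1, ← zpow_natCast, Int.toNat_of_nonneg hile]
    exact hi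
  · have hv : 1 ≤ v := hi ▸ g_zpos hγ i u hu
    have hvu : (γ ^ (-i).toNat) v = u := by
      rw [← zpow_natCast, Int.toNat_of_nonneg (by omega), ← hi, ← Equiv.Perm.mul_apply,
        ← zpow_add]
      simp
    refine SameCycle.symm (sc_nat (-i).toNat ?_)
    rw [(rho_pow_pos hγ (-i).toNat v hv).1]
    exact hvu

-- ### negation symmetry

theorem neg_conj_sc {σ : Perm ℤ} (hσ : (Equiv.neg ℤ) * σ * (Equiv.neg ℤ) = σ⁻¹) {z w : ℤ}
    (h : σ.SameCycle z w) : σ.SameCycle (-z) (-w) := by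
  have h2 := SameCycle.conj (g := Equiv.neg ℤ) h
  rw [neg_inv, hσ] at h2
  have h3 := sameCycle_inv.mp h2
  simpa [Equiv.neg_apply] using h3

theorem rho_premap : (Equiv.neg ℤ) * (γ * (permMinus γ)⁻¹) * (Equiv.neg ℤ) =
    (γ * (permMinus γ)⁻¹)⁻¹ := by
  have h1 : (γ * (permMinus γ)⁻¹)⁻¹ = permMinus γ * γ⁻¹ := by
    rw [mul_inv_rev, inv_inv]
  rw [h1]
  ext z
  simp only [Equiv.Perm.mul_apply, Equiv.neg_apply]
  rw [permMinus_inv_apply, permMinus_apply]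
  simp

theorem gc2 (hγ : Hg n γ) (hπ1 : (Equiv.neg ℤ) * π * (Equiv.neg ℤ) = π⁻¹)
    (hjoin : ∀ a b : ℤ, (1 ≤ |a| ∧ |a| ≤ (n : ℤ)) → (1 ≤ |b| ∧ |b| ≤ (n : ℤ)) →
      Relation.EqvGen (fun x y => π.SameCycle x y ∨ γ.SameCycle |x| |y|) a b) :
    qc (Sfin n) (gRel π (γ * (permMinus γ)⁻¹)) ≤ 2 := by
  rcases Nat.eq_zero_or_pos n with hn | hn
  · have h1 := qc_le_card (S := Sfin n) (r := gRel π (γ * (permMinus γ)⁻¹))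
    have hc : (Sfin n).card = 2 * n := card_Sfin
    omega
  · set ρ := γ * (permMinus γ)⁻¹ with hρdef
    set E := gRel π ρ with hEdef
    have hEe := gRel_equiv π ρ
    have hρ1 : (Equiv.neg ℤ) * ρ * (Equiv.neg ℤ) = ρ⁻¹ := rho_premap
    have hneg : ∀ z w, E z w → E (-z) (-w) := by
      intro z w h
      have he' : Equivalence (fun z w => E (-z) (-w)) :=
        ⟨fun z => hEe.refl _, fun h => hEe.symm h, fun h g => hEe.trans h g⟩
      refine gRel_subset he' ?_ ?_ h
      · intro u v huv; exact gRel_left (neg_conj_sc hπ1 huv)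
      · intro u v huv; exact gRel_right (neg_conj_sc hρ1 huv)
    set Es := fun z w => E z w ∨ E z (-w) with hEsdef
    have hEsequiv : Equivalence Es := by
      constructor
      · intro z; exact Or.inl (hEe.refl z)
      · rintro z w (h | h)
        · exact Or.inl (hEe.symm h)
        · right
          have := hneg _ _ (hEe.symm h)
          rwa [neg_neg] at this
      · rintro z w u (h | h) (g | g)
        · exact Or.inl (hEe.trans h g)
        · exact Or.inr (hEe.trans h g)
        · exact Or.inr (hEe.trans h (hneg _ _ g))
        · left
          have := hneg _ _ g
          rw [neg_neg] at this
          exact hEe.trans h this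
    have habs : ∀ x : ℤ, Es x |x| := by
      intro x
      rcases abs_cases x with ⟨h1, _⟩ | ⟨h1, _⟩
      · rw [h1]; exact hEsequiv.refl x
      · right; rw [h1, neg_neg]; exact hEe.refl x
    have hbase : ∀ x y : ℤ, (π.SameCycle x y ∨ γ.SameCycle |x| |y|) → Es x y := by
      rintro x y (h | h)
      · exact Or.inl (gRel_left h)
      · rcases eq_or_ne x 0 with rfl | hx0
        · have h0 : Function.IsFixedPt γ |(0:ℤ)| := by
            show γ |(0:ℤ)| = |(0:ℤ)|
            rw [abs_zero]
            exact hγ 0 (by omega)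
          have heq := h.eq_of_left h0
          have hy : y = 0 := by
            rw [abs_zero] at heq
            rcases abs_cases y with ⟨e1, _⟩ | ⟨e1, _⟩ <;> omega
          subst hy
          exact hEsequiv.refl 0
        · have hx1 : (1:ℤ) ≤ |x| := by
            rcases abs_cases x with ⟨e1, _⟩ | ⟨e1, _⟩ <;> omega
          have hρsc : ρ.SameCycle |x| |y| := sc_pos hγ hx1 h
          have h1 : Es |x| |y| := Or.inl (gRel_right hρsc)
          have h2 : Es |y| y := hEsequiv.symm (habs y)
          exact hEsequiv.trans (habs x) (hEsequiv.trans h1 h2)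
    have hclaim : ∀ z : ℤ, z ∈ Sfin n → E z 1 ∨ E z (-1) := by
      intro z hz
      rw [mem_Sfin] at hz
      have h1 : (1:ℤ) ≤ |(1:ℤ)| ∧ |(1:ℤ)| ≤ (n:ℤ) := by
        rw [abs_one]
        omega
      have hj := hjoin z 1 hz h1
      exact (Equivalence.eqvGen_iff hEsequiv).mp (Relation.EqvGen.mono hbase _ _ hj)
    have h1S : (1:ℤ) ∈ Sfin n := by rw [mem_Sfin, abs_one]; omega
    have hm1S : (-1:ℤ) ∈ Sfin n := by
      rw [mem_Sfin]
      norm_num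
      omega
    have h1S' : (1:ℤ) ∈ (Sfin n : Set ℤ) := by exact_mod_cast h1S
    have hm1S' : (-1:ℤ) ∈ (Sfin n : Set ℤ) := by exact_mod_cast hm1S
    have hsurj : Function.Surjective
        (fun c : Bool => if c then Quot.mk (fun a b : ((Sfin n : Set ℤ)) => E ↑a ↑b) ⟨1, h1S'⟩
          else Quot.mk (fun a b : ((Sfin n : Set ℤ)) => E ↑a ↑b) ⟨-1, hm1S'⟩) := by
      intro q
      obtain ⟨z, rfl⟩ := Quot.exists_rep q
      have hzS : (z : ℤ) ∈ Sfin n := by exact_mod_cast z.2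
      rcases hclaim z hzS with h | h
      · exact ⟨true, Quot.sound (hEe.symm h)⟩
      · exact ⟨false, Quot.sound (hEe.symm h)⟩
    have hle : qc (Sfin n) E ≤ Nat.card Bool :=
      Nat.card_le_card_of_surjective _ hsurj
    simpa using hle

theorem count3 (hγ : Hg n γ) :
    qc (Sfin n) (SameCycle (γ⁻¹ * π⁻¹ * permMinus γ)) =
      qc (Sfin n) (SameCycle (π * (γ * (permMinus γ)⁻¹))) := by
  have e1 : qc (Sfin n) (SameCycle (γ⁻¹ * π⁻¹ * permMinus γ)) =
      qc (Sfin n) (SameCycle ((γ⁻¹ * π⁻¹ * permMinus γ)⁻¹)) :=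
    qc_congr (fun a b _ _ => sameCycle_inv.symm)
  have e2 : (γ⁻¹ * π⁻¹ * permMinus γ)⁻¹ =
      (permMinus γ)⁻¹ * (π * (γ * (permMinus γ)⁻¹)) * ((permMinus γ)⁻¹)⁻¹ := by
    group
  rw [e1, e2]
  exact qc_conj (gm_inv_maps hγ) (by
    intro z hz
    rw [inv_inv]
    exact gm_maps hγ z hz)

end Main


end S6

/-- if `γ ∈ S([n])` has orbits `V₁,…,V_r` and the premap `π` on
`±[n]` joins the blocks `±V₁,…,±V_r` into the full partition, then
`χ(γ,π) ≤ 2`. -/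
theorem statement6 (n : ℕ) (γ π : Equiv.Perm ℤ)
    (hγ : ∀ k : ℤ, ¬(1 ≤ k ∧ k ≤ (n : ℤ)) → γ k = k)
    (hπ : IsPremap π)
    (hπsupp : ∀ k : ℤ, ¬(1 ≤ |k| ∧ |k| ≤ (n : ℤ)) → π k = k)
    (hjoin : ∀ a b : ℤ, (1 ≤ |a| ∧ |a| ≤ (n : ℤ)) → (1 ≤ |b| ∧ |b| ≤ (n : ℤ)) →
      Relation.EqvGen (fun x y => π.SameCycle x y ∨ γ.SameCycle |x| |y|) a b) :
    chi (Finset.Icc 1 (n : ℤ)) γ π ≤ 2 := by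
  have hγ' : S6.Hg n γ := hγ
  set ρ := γ * (permMinus γ)⁻¹ with hρdef
  have hπS : S6.Supp (S6.Sfin n) π := S6.pi_supp hπsupp
  have hρS : S6.Supp (S6.Sfin n) ρ := S6.rho_supp hγ'
  have hkey := S6.key (S6.Sfin n) π ρ hπS hρS
  have hg : S6.qc (S6.Sfin n) (S6.gRel π ρ) ≤ 2 := S6.gc2 hγ' hπ.1 hjoin
  have h3 := S6.count3 (π := π) hγ'
  have hcard : (S6.Sfin n).card = 2 * n := S6.card_Sfin
  have hIcard : (Finset.Icc 1 (n:ℤ)).card = n := by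
    rw [Int.card_Icc]
    omega
  have hchi : chi (Finset.Icc 1 (n:ℤ)) γ π =
      (S6.qc (S6.Sfin n) (Equiv.Perm.SameCycle ρ) : ℚ)/2 +
      (S6.qc (S6.Sfin n) (Equiv.Perm.SameCycle π) : ℚ)/2 +
      (S6.qc (S6.Sfin n) (Equiv.Perm.SameCycle (γ⁻¹ * π⁻¹ * permMinus γ)) : ℚ)/2 - n := by
    unfold chi
    rw [S6.pmSet_eq, hIcard]
    rfl
  rw [hchi, h3]
  set A := S6.qc (S6.Sfin n) (Equiv.Perm.SameCycle ρ) with hA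
  set B := S6.qc (S6.Sfin n) (Equiv.Perm.SameCycle π) with hB
  set C := S6.qc (S6.Sfin n) (Equiv.Perm.SameCycle (π * ρ)) with hC
  have hsum : B + A + C ≤ 2 * n + 4 := by omega
  have hq : (A:ℚ) + B + C ≤ 2 * (n:ℚ) + 4 := by exact_mod_cast (by omega : A + B + C ≤ 2*n+4)
  linarith
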